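/- With R = Z[q^{±1}, A^{±1}] and I_n the ideal generated by {α+l; n} for l ∈ Z, the evaluation map f_k : R → Z[q^{±1}] sending A to q^k maps I_n into the ideal {n}!·Z[q^{±1}], where {n}! = ∏_{i=1}^n (q^i − q^{−i}). -/

import Mathlib

/-- The ring `R = ℤ[q^{±1}, A^{±1}]`, realized as the group algebra of `ℤ × ℤ` over `ℤ`. -/
abbrev TwoVarLaurent : Type := AddMonoidAlgebra ℤ (ℤ × ℤ)

/-- `q^m`. -/
noncomputable def qpow (m : ℤ) : TwoVarLaurent := AddMonoidAlgebra.single (m, 0) 1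

/-- `A^m`. -/
noncomputable def Apow (m : ℤ) : TwoVarLaurent := AddMonoidAlgebra.single (0, m) 1

/-- `{α+l; n} = ∏_{i=0}^{n−1} (A q^{l−i} − A^{−1} q^{−l+i})`. -/
noncomputable def braidProd (l : ℤ) (n : ℕ) : TwoVarLaurent :=
  ∏ i ∈ Finset.range n, (Apow 1 * qpow (l - i) - Apow (-1) * qpow (-l + i))

/-- The ideal `I_n` generated by the `{α+l; n}`, `l ∈ ℤ`. -/
noncomputable def In (n : ℕ) : Ideal TwoVarLaurent :=
  Ideal.span { x | ∃ l : ℤ, x = braidProd l n }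

/-- The additive monoid hom `(ℤ × ℤ) → ℤ`, `(a, b) ↦ a + k b`, inducing `q ↦ q`, `A ↦ q^k`. -/
def expHom (k : ℤ) : ℤ × ℤ →+ ℤ where
  toFun p := p.1 + k * p.2
  map_zero' := by simp
  map_add' p q := by simp [Prod.fst_add, Prod.snd_add]; ring

/-- The evaluation ring homomorphism `f_k : ℤ[q^{±1}, A^{±1}] → ℤ[q^{±1}]`, `A ↦ q^k`. -/
noncomputable def fk (k : ℤ) : TwoVarLaurent →+* AddMonoidAlgebra ℤ ℤ :=
  AddMonoidAlgebra.mapDomainRingHom ℤ (expHom k)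

/-- The quantum factorial `{n}! = ∏_{i=1}^{n} (q^i − q^{−i})` in `ℤ[q^{±1}]`. -/
noncomputable def qfact (n : ℕ) : AddMonoidAlgebra ℤ ℤ :=
  ∏ i ∈ Finset.range n,
    (AddMonoidAlgebra.single ((i : ℤ) + 1) 1 - AddMonoidAlgebra.single (-(i : ℤ) - 1) 1)

noncomputable def Q (m : ℤ) : AddMonoidAlgebra ℤ ℤ := AddMonoidAlgebra.single m 1

noncomputable def sig (m : ℤ) : AddMonoidAlgebra ℤ ℤ := Q m - Q (-m)

noncomputable def g (m : ℤ) (n : ℕ) : AddMonoidAlgebra ℤ ℤ :=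
  ∏ i ∈ Finset.range n, sig (m - i)

lemma Q_mul (a b : ℤ) : Q a * Q b = Q (a + b) := by
  unfold Q
  rw [AddMonoidAlgebra.single_mul_single, one_mul]

lemma Q_inv (a : ℤ) : Q a * Q (-a) = 1 := by
  rw [Q_mul, add_neg_cancel]
  rfl

lemma sigma_add (x y : ℤ) : sig (x + y) = Q y * sig x + Q (-x) * sig y := by
  unfold sig
  rw [mul_sub, mul_sub, Q_mul, Q_mul, Q_mul, Q_mul]
  rw [add_comm y x, add_comm y (-x), show -x + -y = -(x+y) by ring]
  abel

lemma g_succ (m : ℤ) (n : ℕ) : g m (n + 1) = g m n * sig (m - n) :=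
  Finset.prod_range_succ _ n

lemma g_succ' (m : ℤ) (n : ℕ) : g (m + 1) (n + 1) = g m n * sig (m + 1) := by
  unfold g
  rw [Finset.prod_range_succ']
  congr 1
  · exact Finset.prod_congr rfl fun i _ => by congr 1; push_cast; ring
  · congr 1; push_cast; ring

lemma g_rec (m : ℤ) (n : ℕ) :
    g (m + 1) (n + 1) =
      Q ((n : ℤ) + 1) * g m (n + 1) + Q ((n : ℤ) - m) * (sig ((n : ℤ) + 1) * g m n) := by
  rw [g_succ', g_succ]
  have h := sigma_add (m - n) ((n : ℤ) + 1)
  rw [show m - (n : ℤ) + ((n : ℤ) + 1) = m + 1 by ring,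
      show -(m - (n : ℤ)) = (n : ℤ) - m by ring] at h
  rw [h]
  ring

noncomputable def qf (n : ℕ) : AddMonoidAlgebra ℤ ℤ :=
  ∏ i ∈ Finset.range n, sig ((i : ℤ) + 1)

lemma qf_succ (n : ℕ) : qf (n + 1) = qf n * sig ((n : ℤ) + 1) :=
  Finset.prod_range_succ _ n

lemma qf_dvd_g (n : ℕ) : ∀ m : ℤ, qf n ∣ g m n := by
  induction n with
  | zero => intro m; exact one_dvd _
  | succ n ih =>
    have key : ∀ m : ℤ, qf (n + 1) ∣ sig ((n : ℤ) + 1) * g m n := by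
      intro m
      rw [qf_succ, mul_comm (qf n)]
      exact mul_dvd_mul_left _ (ih m)
    intro m
    induction m using Int.induction_on with
    | zero =>
      have : g 0 (n + 1) = 0 := by
        apply Finset.prod_eq_zero (Finset.mem_range.mpr (Nat.succ_pos n))
        simp [sig]
      rw [this]; exact dvd_zero _
    | succ i hi =>
      rw [g_rec]
      exact dvd_add ((hi).mul_left _) ((key _).mul_left _)
    | pred i hi =>
      have hrec := g_rec (-(i : ℤ) - 1) n
      rw [show -(i : ℤ) - 1 + 1 = -(i : ℤ) by ring] at hrec
      have h2 : g (-(i : ℤ) - 1) (n + 1) =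
          Q (-((n : ℤ) + 1)) * g (-(i : ℤ)) (n + 1) -
            Q (-((n : ℤ) + 1)) * (Q ((n : ℤ) - (-(i : ℤ) - 1)) *
              (sig ((n : ℤ) + 1) * g (-(i : ℤ) - 1) n)) := by
        have hu := Q_inv ((n : ℤ) + 1)
        linear_combination (-(Q (-((n : ℤ) + 1)))) * hrec -
          g (-(i : ℤ) - 1) (n + 1) * hu
      rw [h2]
      exact dvd_sub (hi.mul_left _) (((key _).mul_left _).mul_left _)

lemma qfact_eq (n : ℕ) : qfact n = qf n := by
  unfold qfact qf
  refine Finset.prod_congr rfl fun i _ => ?_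
  unfold sig Q
  congr 1
  ring

lemma fk_single (k : ℤ) (p : ℤ × ℤ) (c : ℤ) :
    fk k (AddMonoidAlgebra.single p c) = AddMonoidAlgebra.single (p.1 + k * p.2) c := by
  simp [fk, AddMonoidAlgebra.mapDomainRingHom, Finsupp.mapDomain_single, expHom]

lemma fk_braid (k l : ℤ) (n : ℕ) : fk k (braidProd l n) = g (k + l) n := by
  unfold braidProd g
  rw [map_prod]
  refine Finset.prod_congr rfl fun i _ => ?_
  have h1 : Apow 1 * qpow (l - i) = AddMonoidAlgebra.single ((l - (i:ℤ), (1:ℤ))) 1 := by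
    unfold Apow qpow
    rw [AddMonoidAlgebra.single_mul_single]
    norm_num
  have h2 : Apow (-1) * qpow (-l + i) = AddMonoidAlgebra.single ((-l + (i:ℤ), (-1:ℤ))) 1 := by
    unfold Apow qpow
    rw [AddMonoidAlgebra.single_mul_single]
    norm_num
  rw [map_sub, h1, h2, fk_single, fk_single]
  unfold sig Q
  congr 1 <;> · congr 1; simp; ring_nf

/-- the evaluation `f_k` maps `I_n` into the ideal `{n}! · ℤ[q^{±1}]`. -/
theorem stmt_3 (k : ℤ) (n : ℕ) (x : TwoVarLaurent) (hx : x ∈ In n) :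
    fk k x ∈ Ideal.span {qfact n} := by
  rw [← Ideal.mem_comap]
  refine Ideal.span_le.mpr ?_ hx
  rintro y ⟨l, rfl⟩
  rw [SetLike.mem_coe, Ideal.mem_comap, Ideal.mem_span_singleton, qfact_eq, fk_braid]
  exact qf_dvd_g n (k + l)
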